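/- Let b < 0, \delta > 0, 1 < \alpha < 2, and let u < 0, t \ge 0. The function \psi : [0, \infty) \to (-\infty, 0) given by \psi(s) = -\big( ((-u e^{bt})^{1-\alpha} + \delta^{\alpha}/(b\alpha)) e^{b(\alpha-1)s} - \delta^{\alpha}/(b\alpha) \big)^{1/(1-\alpha)} satisfies the Bernoulli-type differential equation \psi'(s) = (\delta^{\alpha}/\alpha)(-\psi(s))^{\alpha} - b \psi(s) for all s \ge 0 with \psi(0) = u e^{bt}. Moreover, \lim_{t \to \infty} \psi(t) evaluated along s = t equals -\big((-u)^{1-\alpha} - \delta^{\alpha}/(b\alpha)\big)^{1/(1-\alpha)}. -/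

import Mathlib

open Real Filter

theorem stmt_16 (b δ α u : ℝ) (hb : b < 0) (hδ : 0 < δ) (hα1 : 1 < α) (hα2 : α < 2)
    (hu : u < 0) (Ψ : ℝ → ℝ → ℝ)
    (hΨ : ∀ t s, Ψ t s =
      -(((-(u * Real.exp (b * t))) ^ (1 - α) + δ ^ α / (b * α)) * Real.exp (b * (α - 1) * s)
          - δ ^ α / (b * α)) ^ (1 / (1 - α))) :
    (∀ t ≥ (0:ℝ), (∀ s ≥ (0:ℝ),
        HasDerivAt (Ψ t) (δ ^ α / α * (-(Ψ t s)) ^ α - b * Ψ t s) s) ∧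
      Ψ t 0 = u * Real.exp (b * t)) ∧
    Tendsto (fun t => Ψ t t) atTop
      (nhds (-((-u) ^ (1 - α) - δ ^ α / (b * α)) ^ (1 / (1 - α)))) := by
  have hαpos : (0:ℝ) < α := by linarith
  have hne : (1 - α) ≠ 0 := by intro h; linarith
  set c := δ ^ α / (b * α) with hc_def
  set p := 1 / (1 - α) with hp_def
  have hc : c < 0 := div_neg_of_pos_of_neg (rpow_pos_of_pos hδ α) (mul_neg_of_neg_of_pos hb hαpos)
  have hbc : b * c = δ ^ α / α := by
    rw [hc_def]; field_simp [ne_of_lt (mul_neg_of_neg_of_pos hb hαpos), ne_of_lt hb]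
  have hkp : b * (α - 1) * p = -b := by rw [hp_def]; field_simp; ring
  have hpα : p * α = p - 1 := by rw [hp_def]; field_simp; ring
  have h1p : (1 - α) * p = 1 := by rw [hp_def]; field_simp
  -- positivity of the base
  have hpos : ∀ X : ℝ, 0 < X → ∀ s : ℝ, 0 ≤ s →
      0 < (X ^ (1 - α) + c) * Real.exp (b * (α - 1) * s) - c := by
    intro X hX s hs
    have hAc : 0 < X ^ (1 - α) := rpow_pos_of_pos hX _
    have he1 : Real.exp (b * (α - 1) * s) ≤ 1 := by
      rw [Real.exp_le_one_iff]
      have : b * (α - 1) ≤ 0 := by nlinarith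
      nlinarith
    have he0 : 0 < Real.exp (b * (α - 1) * s) := Real.exp_pos _
    rcases le_or_gt (X ^ (1 - α) + c) 0 with h | h
    · nlinarith
    · nlinarith
  constructor
  · intro t ht
    set X := -(u * Real.exp (b * t)) with hX_def
    have hX : 0 < X := by
      rw [hX_def]
      have := Real.exp_pos (b * t)
      nlinarith
    have hfun : Ψ t = fun s => -((X ^ (1 - α) + c) * Real.exp (b * (α - 1) * s) - c) ^ p :=
      funext fun s => hΨ t s
    set A := X ^ (1 - α) + c with hA_def
    constructor
    · intro s hs
      set k := b * (α - 1) with hk_def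
      have hg : 0 < A * Real.exp (k * s) - c := hpos X hX s hs
      have d1 : HasDerivAt (fun s : ℝ => k * s) k s := by
        simpa using (hasDerivAt_id s).const_mul k
      have d2 := d1.exp
      have d3 := (d2.const_mul A).sub_const c
      have d4 := d3.rpow_const (p := p) (Or.inl (ne_of_gt hg))
      have d5 := d4.neg
      rw [hfun]
      convert d5 using 1
      · rfl
      · rfl
      · rfl
      beta_reduce
      set g := A * Real.exp (k * s) - c with hg_def
      have e1 : (g ^ p) ^ α = g ^ (p - 1) := by
        rw [← Real.rpow_mul hg.le, hpα]
      have e2 : g ^ (p - 1) * g = g ^ p := by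
        rw [← Real.rpow_add_one (ne_of_gt hg) (p - 1)]
        ring_nf
      have e3 : A * Real.exp (k * s) = g + c := by rw [hg_def]; ring
      have e4 : k * p = -b := hkp
      calc δ ^ α / α * (- -g ^ p) ^ α - b * -g ^ p
          = b * c * (g ^ p) ^ α + b * g ^ p := by rw [hbc]; ring
        _ = b * c * g ^ (p - 1) + b * (g ^ (p - 1) * g) := by rw [e1, e2]
        _ = -(A * Real.exp (k * s) * (k * p) * g ^ (p - 1)) := by
            rw [e3, e4]; ring
        _ = -(A * (Real.exp (k * s) * k) * p * g ^ (p - 1)) := by ring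
    · rw [hΨ t 0]
      simp only [mul_zero, Real.exp_zero, mul_one]
      rw [show -(u * Real.exp (b * t)) = X from hX_def.symm,
          show X ^ (1 - α) + c - c = X ^ (1 - α) from by ring,
          ← Real.rpow_mul hX.le, h1p, Real.rpow_one, hX_def]
      ring
  · -- limit
    have heq : ∀ t : ℝ, Ψ t t = -(((-u) ^ (1 - α) + c * Real.exp (b * (α - 1) * t) - c)) ^ p := by
      intro t
      rw [hΨ t t]
      have h1 : -(u * Real.exp (b * t)) = (-u) * Real.exp (b * t) := by ring
      have h2 : ((-u) * Real.exp (b * t)) ^ (1 - α)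
          = (-u) ^ (1 - α) * Real.exp (b * t * (1 - α)) := by
        rw [Real.mul_rpow (by linarith) (Real.exp_pos _).le]
        congr 1
        rw [Real.rpow_def_of_pos (Real.exp_pos _), Real.log_exp]
      have h3 : Real.exp (b * t * (1 - α)) * Real.exp (b * (α - 1) * t) = 1 := by
        rw [← Real.exp_add]
        rw [show b * t * (1 - α) + b * (α - 1) * t = 0 by ring, Real.exp_zero]
      congr 2
      rw [h1, h2]
      calc ((-u) ^ (1 - α) * Real.exp (b * t * (1 - α)) + c) * Real.exp (b * (α - 1) * t) - c
          = (-u) ^ (1 - α) * (Real.exp (b * t * (1 - α)) * Real.exp (b * (α - 1) * t))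
            + c * Real.exp (b * (α - 1) * t) - c := by ring
        _ = (-u) ^ (1 - α) + c * Real.exp (b * (α - 1) * t) - c := by rw [h3, mul_one]
    have hE : Tendsto (fun t => Real.exp (b * (α - 1) * t)) atTop (nhds 0) := by
      rw [Real.tendsto_exp_comp_nhds_zero]
      exact (tendsto_const_mul_atBot_of_neg (by nlinarith)).2 tendsto_id
    have hbase : Tendsto (fun t => (-u) ^ (1 - α) + c * Real.exp (b * (α - 1) * t) - c)
        atTop (nhds ((-u) ^ (1 - α) - c)) := by
      have := ((hE.const_mul c).const_add ((-u) ^ (1 - α))).sub_const c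
      simpa using this
    have hL : 0 < (-u) ^ (1 - α) - c := by
      have : 0 < (-u) ^ (1 - α) := rpow_pos_of_pos (by linarith) _
      linarith
    have := (hbase.rpow_const (p := p) (Or.inl (ne_of_gt hL))).neg
    rw [show (fun t => Ψ t t) = fun t => -(((-u) ^ (1 - α) + c * Real.exp (b * (α - 1) * t) - c)) ^ p
      from funext heq]
    exact this
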